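/- Let t₁, t₂ be variables, s₂ = t₁² + t₁t₂ + t₂², s₁ = t₁ + t₂, and Ω(x,y) = y² / ((1 − y(x⁻¹ − t₁))(1 − y(x⁻¹ − t₂))) in the field ℚ(t₁, t₂, x, y). Setting z = y⁻¹ − x⁻¹, the identity (z³ − z·s₂) · (Ω(y,x) − Ω(x,y)) = s₁ · (2 − t₁t₂·(Ω(x,y) + Ω(y,x))) holds as rational functions. -/

import Mathlib

/-- The field `ℚ(t₁, t₂, x, y)` of rational functions in four variables. -/
abbrev RatF4 : Type := FractionRing (MvPolynomial (Fin 4) ℚ)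

/-- The function `Ω(x,y) = y² / ((1 − y(x⁻¹ − t₁))(1 − y(x⁻¹ − t₂)))`. -/
noncomputable def OmegaFn (t1 t2 a b : RatF4) : RatF4 :=
  b ^ 2 / ((1 - b * (a⁻¹ - t1)) * (1 - b * (a⁻¹ - t2)))

lemma aux_factor {K : Type*} [Field K] {x y t : K} (hy : y ≠ 0)
    (h : y - x + x * y * t ≠ 0) : 1 - x * (y⁻¹ - t) ≠ 0 := by
  intro h0
  apply h
  have h1 : y * (1 - x * (y⁻¹ - t)) = 0 := by rw [h0]; ring
  have h2 : y - x * (y * y⁻¹) + x * y * t = 0 := by linear_combination h1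
  rwa [mul_inv_cancel₀ hy, mul_one] at h2

lemma main_identity {K : Type*} [Field K] (t1 t2 x y : K) (hx : x ≠ 0) (hy : y ≠ 0)
    (hA : y - x + x * y * t1 ≠ 0) (hB : y - x + x * y * t2 ≠ 0)
    (hC : x - y + y * x * t1 ≠ 0) (hD : x - y + y * x * t2 ≠ 0) :
    ((y⁻¹ - x⁻¹) ^ 3 - (y⁻¹ - x⁻¹) * (t1 ^ 2 + t1 * t2 + t2 ^ 2)) *
        (x ^ 2 * y ^ 2 / ((y - x + x * y * t1) * (y - x + x * y * t2)) -
          y ^ 2 * x ^ 2 / ((x - y + y * x * t1) * (x - y + y * x * t2))) =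
      (t1 + t2) * (2 - t1 * t2 *
        (y ^ 2 * x ^ 2 / ((x - y + y * x * t1) * (x - y + y * x * t2)) +
          x ^ 2 * y ^ 2 / ((y - x + x * y * t1) * (y - x + x * y * t2)))) := by
  obtain ⟨A, hAe⟩ : ∃ A, A = y - x + x * y * t1 := ⟨_, rfl⟩
  obtain ⟨B, hBe⟩ : ∃ B, B = y - x + x * y * t2 := ⟨_, rfl⟩
  obtain ⟨C, hCe⟩ : ∃ C, C = x - y + y * x * t1 := ⟨_, rfl⟩
  obtain ⟨D, hDe⟩ : ∃ D, D = x - y + y * x * t2 := ⟨_, rfl⟩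
  rw [← hAe] at hA ⊢
  rw [← hBe] at hB ⊢
  rw [← hCe] at hC ⊢
  rw [← hDe] at hD ⊢
  field_simp
  subst hAe hBe hCe hDe
  ring

set_option maxHeartbeats 2000000 in
theorem statement10 :
    let t1 : RatF4 := algebraMap (MvPolynomial (Fin 4) ℚ) RatF4 (MvPolynomial.X 0)
    let t2 : RatF4 := algebraMap (MvPolynomial (Fin 4) ℚ) RatF4 (MvPolynomial.X 1)
    let x : RatF4 := algebraMap (MvPolynomial (Fin 4) ℚ) RatF4 (MvPolynomial.X 2)
    let y : RatF4 := algebraMap (MvPolynomial (Fin 4) ℚ) RatF4 (MvPolynomial.X 3)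
    let s2 : RatF4 := t1 ^ 2 + t1 * t2 + t2 ^ 2
    let s1 : RatF4 := t1 + t2
    let z : RatF4 := y⁻¹ - x⁻¹
    (z ^ 3 - z * s2) * (OmegaFn t1 t2 y x - OmegaFn t1 t2 x y) =
      s1 * (2 - t1 * t2 * (OmegaFn t1 t2 x y + OmegaFn t1 t2 y x)) := by
  intro t1 t2 x y s2 s1 z
  have hinj : Function.Injective (algebraMap (MvPolynomial (Fin 4) ℚ) RatF4) :=
    IsFractionRing.injective _ _
  have key : ∀ (p : MvPolynomial (Fin 4) ℚ) (v : Fin 4 → ℚ),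
      MvPolynomial.eval v p ≠ 0 → algebraMap (MvPolynomial (Fin 4) ℚ) RatF4 p ≠ 0 := by
    intro p v hv h
    apply hv
    have : p = 0 := hinj (by simpa using h)
    simp [this]
  have hx : x ≠ 0 := key _ (fun _ => 1) (by simp)
  have hy : y ≠ 0 := key _ (fun _ => 1) (by simp)
  have hA : y - x + x * y * t1 ≠ 0 := by
    have : y - x + x * y * t1 =
        algebraMap (MvPolynomial (Fin 4) ℚ) RatF4
          (MvPolynomial.X 3 - MvPolynomial.X 2 +
            MvPolynomial.X 2 * MvPolynomial.X 3 * MvPolynomial.X 0) := by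
      simp [t1, x, y]
    rw [this]
    exact key _ ![0, 0, 1, 2] (by norm_num [Matrix.cons_val_three, Matrix.cons_val_two])
  have hB : y - x + x * y * t2 ≠ 0 := by
    have : y - x + x * y * t2 =
        algebraMap (MvPolynomial (Fin 4) ℚ) RatF4
          (MvPolynomial.X 3 - MvPolynomial.X 2 +
            MvPolynomial.X 2 * MvPolynomial.X 3 * MvPolynomial.X 1) := by
      simp [t2, x, y]
    rw [this]
    exact key _ ![0, 0, 1, 2] (by norm_num [Matrix.cons_val_three, Matrix.cons_val_two])
  have hC : x - y + y * x * t1 ≠ 0 := by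
    have : x - y + y * x * t1 =
        algebraMap (MvPolynomial (Fin 4) ℚ) RatF4
          (MvPolynomial.X 2 - MvPolynomial.X 3 +
            MvPolynomial.X 3 * MvPolynomial.X 2 * MvPolynomial.X 0) := by
      simp [t1, x, y]
    rw [this]
    exact key _ ![0, 0, 2, 1] (by norm_num [Matrix.cons_val_three, Matrix.cons_val_two])
  have hD : x - y + y * x * t2 ≠ 0 := by
    have : x - y + y * x * t2 =
        algebraMap (MvPolynomial (Fin 4) ℚ) RatF4
          (MvPolynomial.X 2 - MvPolynomial.X 3 +
            MvPolynomial.X 3 * MvPolynomial.X 2 * MvPolynomial.X 1) := by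
      simp [t2, x, y]
    rw [this]
    exact key _ ![0, 0, 2, 1] (by norm_num [Matrix.cons_val_three, Matrix.cons_val_two])
  -- rewrite OmegaFn in terms of polynomial denominators
  have hf1 : (1 : RatF4) - x * (y⁻¹ - t1) ≠ 0 := aux_factor hy hA
  have hf2 : (1 : RatF4) - x * (y⁻¹ - t2) ≠ 0 := aux_factor hy hB
  have hf3 : (1 : RatF4) - y * (x⁻¹ - t1) ≠ 0 := aux_factor hx hC
  have hf4 : (1 : RatF4) - y * (x⁻¹ - t2) ≠ 0 := aux_factor hx hD
  have conv1 : OmegaFn t1 t2 y x = x ^ 2 * y ^ 2 / ((y - x + x * y * t1) * (y - x + x * y * t2)) := by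
    have e1 : y - x + x * y * t1 = (1 - x * (y⁻¹ - t1)) * y := by field_simp; ring
    have e2 : y - x + x * y * t2 = (1 - x * (y⁻¹ - t2)) * y := by field_simp; ring
    rw [OmegaFn, e1, e2, div_eq_div_iff (mul_ne_zero hf1 hf2)
      (mul_ne_zero (mul_ne_zero hf1 hy) (mul_ne_zero hf2 hy))]
    ring
  have conv2 : OmegaFn t1 t2 x y = y ^ 2 * x ^ 2 / ((x - y + y * x * t1) * (x - y + y * x * t2)) := by
    have e1 : x - y + y * x * t1 = (1 - y * (x⁻¹ - t1)) * x := by field_simp; ring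
    have e2 : x - y + y * x * t2 = (1 - y * (x⁻¹ - t2)) * x := by field_simp; ring
    rw [OmegaFn, e1, e2, div_eq_div_iff (mul_ne_zero hf3 hf4)
      (mul_ne_zero (mul_ne_zero hf3 hx) (mul_ne_zero hf4 hx))]
    ring
  rw [conv1, conv2]
  exact main_identity t1 t2 x y hx hy hA hB hC hD
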